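/- For the descriptor realization: if V, W ∈ C^{n×p} have columns V e_j = (A - s_j I)^{-1}b/(c^T(A - s_j I)^{-1}b) and W e_j = (A^T - s_j I)^{-1}c/(c^T(A - s_j I)^{-1}b), then W^T A V = e v^T + (W^T V) S, where S = diag(s_1,...,s_p), e = (1,...,1)^T, and v^T = (1/(c^T(A - s_1 I)^{-1}b), ..., 1/(c^T(A - s_p I)^{-1}b)); hence F = (W^T V)^{-1} W^T A V = (W^T V)^{-1} e v^T + S. -/
import Mathlib


open Matrix

/-- `Wᵀ A V = e vᵀ + (WᵀV) S`, hence `F = (WᵀV)⁻¹ Wᵀ A V = (WᵀV)⁻¹ e vᵀ + S`,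
where `S = diag(s₁,...,s_p)`, `e = (1,...,1)ᵀ`, and
`vᵀ = (1/(cᵀ(A-s₁I)⁻¹b), ..., 1/(cᵀ(A-s_pI)⁻¹b))`. -/
theorem stmt_18 {n p : ℕ}
    (A : Matrix (Fin n) (Fin n) ℂ) (b c : Fin n → ℂ)
    (s : Fin p → ℂ)
    (hinv : ∀ j : Fin p, IsUnit (A - s j • (1 : Matrix (Fin n) (Fin n) ℂ)))
    (hden : ∀ j : Fin p,
      c ⬝ᵥ (A - s j • (1 : Matrix (Fin n) (Fin n) ℂ))⁻¹.mulVec b ≠ 0)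
    (V W : Matrix (Fin n) (Fin p) ℂ)
    (hV : ∀ j : Fin p, (fun i => V i j)
      = (c ⬝ᵥ (A - s j • (1 : Matrix (Fin n) (Fin n) ℂ))⁻¹.mulVec b)⁻¹ •
          (A - s j • (1 : Matrix (Fin n) (Fin n) ℂ))⁻¹.mulVec b)
    (hW : ∀ j : Fin p, (fun i => W i j)
      = (c ⬝ᵥ (A - s j • (1 : Matrix (Fin n) (Fin n) ℂ))⁻¹.mulVec b)⁻¹ •
          (Aᵀ - s j • (1 : Matrix (Fin n) (Fin n) ℂ))⁻¹.mulVec c)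
    (hWV : IsUnit (Wᵀ * V))
    (v : Fin p → ℂ)
    (hv : ∀ j : Fin p,
      v j = (c ⬝ᵥ (A - s j • (1 : Matrix (Fin n) (Fin n) ℂ))⁻¹.mulVec b)⁻¹) :
    Wᵀ * A * V = Matrix.of (fun _ j : Fin p => v j) + (Wᵀ * V) * Matrix.diagonal s ∧
    (Wᵀ * V)⁻¹ * (Wᵀ * A * V)
      = (Wᵀ * V)⁻¹ * Matrix.of (fun _ j : Fin p => v j) + Matrix.diagonal s := by
  have main : Wᵀ * A * V = Matrix.of (fun _ j : Fin p => v j) + (Wᵀ * V) * Matrix.diagonal s := by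
    -- W^T b = e
    have hWb : ∀ i : Fin p, (fun k => W k i) ⬝ᵥ b = 1 := by
      intro i
      have hMt : (Aᵀ - s i • (1 : Matrix (Fin n) (Fin n) ℂ))
          = (A - s i • (1 : Matrix (Fin n) (Fin n) ℂ))ᵀ := by
        simp [Matrix.transpose_sub, Matrix.transpose_smul]
      rw [hW i, smul_dotProduct, hMt, ← Matrix.transpose_nonsing_inv,
        Matrix.mulVec_transpose, ← Matrix.dotProduct_mulVec]
      exact inv_mul_cancel₀ (hden i)
    -- A V e_j = v_j b + s_j V e_j
    have hAV : ∀ j : Fin p, A.mulVec (fun k => V k j)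
        = v j • b + s j • (fun k => V k j) := by
      intro j
      set M := A - s j • (1 : Matrix (Fin n) (Fin n) ℂ) with hMdef
      have h1 : M.mulVec (fun k => V k j) = v j • b := by
        rw [hV j, Matrix.mulVec_smul, Matrix.mulVec_mulVec,
          Matrix.mul_nonsing_inv _ ((hinv j).map (Matrix.detMonoidHom))]
        · rw [Matrix.one_mulVec, hv j]
      have hA : A = M + s j • (1 : Matrix (Fin n) (Fin n) ℂ) := by
        rw [hMdef]; simp
      rw [hA, Matrix.add_mulVec, h1, Matrix.smul_mulVec, Matrix.one_mulVec]
    ext i j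
    have e1 : (Wᵀ * A * V) i j
        = (fun k => W k i) ⬝ᵥ A.mulVec (fun k => V k j) := by
      rw [Matrix.mul_assoc, Matrix.mul_apply]
      simp only [Matrix.mul_apply, Matrix.transpose_apply, dotProduct, Matrix.mulVec,
        dotProduct, Finset.mul_sum]
    rw [e1, hAV j, dotProduct_add, dotProduct_smul, dotProduct_smul, hWb i]
    simp only [Matrix.add_apply, Matrix.of_apply, Matrix.mul_apply,
      Matrix.diagonal_apply, Matrix.transpose_apply, smul_eq_mul, mul_one]
    rw [Finset.sum_eq_single j]
    · simp [dotProduct, Finset.mul_sum, mul_comm]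
    · intro k _ hk; simp [hk]
    · simp
  refine ⟨main, ?_⟩
  rw [main, Matrix.mul_add, ← Matrix.mul_assoc,
    Matrix.nonsing_inv_mul _ (hWV.map Matrix.detMonoidHom), Matrix.one_mul]
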